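/- Let K be a compact linearly ordered topological space. Then the set of continuous increasing (order-preserving) real-valued functions on K has dense linear span in the Banach space C(K) of continuous real-valued functions with the supremum norm. -/

import Mathlib

open Set

section Aux

variable {K : Type*} [TopologicalSpace K] [LinearOrder K] [OrderTopology K] [CompactSpace K]

lemma exists_monotone_sep {x y : K} (hxy : x < y) :
    ∃ g : C(K, ℝ), Monotone (g : K → ℝ) ∧ g x < g y := by
  obtain ⟨f, hf0, hf1, hf01⟩ :=
    exists_continuous_zero_one_of_isClosed (isClosed_Iic (a := x)) (isClosed_Ici (a := y))
      (by
        rw [Set.disjoint_left]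
        intro a ha ha'
        exact absurd (le_trans (mem_Ici.1 ha') (mem_Iic.1 ha)) (not_le.2 hxy))
  set g0 : K → ℝ := fun z => sSup (f '' Iic z) with hg0def
  have hub : ∀ z : K, BddAbove (f '' Iic z) := by
    rintro z
    exact ⟨1, by rintro v ⟨q, -, rfl⟩; exact (hf01 q).2⟩
  have hgr : ∀ z : K, ∃ p, p ≤ z ∧ f p = g0 z ∧ ∀ q, q ≤ z → f q ≤ f p := by
    intro z
    obtain ⟨p, hp, hmax⟩ := (isClosed_Iic (a := z)).isCompact.exists_isMaxOn
      ⟨z, le_refl z⟩ f.continuous.continuousOn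
    refine ⟨p, hp, ?_, fun q hq => hmax hq⟩
    exact (IsGreatest.csSup_eq ⟨mem_image_of_mem f hp,
      by rintro v ⟨q, hq, rfl⟩; exact hmax hq⟩).symm
  have hfle : ∀ z : K, f z ≤ g0 z := fun z =>
    le_csSup (hub z) (mem_image_of_mem f self_mem_Iic)
  have hmono : Monotone g0 := fun z w hzw =>
    csSup_le_csSup (hub w) ((nonempty_Iic).image f) (image_mono (f := f) (Iic_subset_Iic.2 hzw))
  have hcont : Continuous g0 := by
    rw [continuous_iff_continuousAt]
    intro z
    rw [ContinuousAt, tendsto_order]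
    constructor
    · intro a ha
      obtain ⟨p, hpz, hfp, -⟩ := hgr z
      rcases eq_or_lt_of_le hpz with rfl | hplt
      · have hmem : {w : K | a < f w} ∈ nhds p :=
          (isOpen_lt continuous_const f.continuous).mem_nhds (by simpa [hfp] using ha)
        filter_upwards [hmem] with w hw
        exact lt_of_lt_of_le hw (hfle w)
      · filter_upwards [isOpen_Ioi.mem_nhds hplt] with w hw
        have : f p ≤ g0 w := le_csSup (hub w) (mem_image_of_mem f (le_of_lt hw))
        rw [← hfp] at ha
        exact lt_of_lt_of_le ha this
    · intro b hb
      rcases ({w : K | b ≤ f w}).eq_empty_or_nonempty with hCe | hCne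
      · refine Filter.Eventually.of_forall fun w => ?_
        obtain ⟨p, hpw, hfp, -⟩ := hgr w
        have : p ∉ ({w : K | b ≤ f w}) := hCe ▸ notMem_empty p
        rw [← hfp]
        exact not_le.1 this
      · obtain ⟨m, hmC, hmlb⟩ :=
          ((isClosed_le continuous_const f.continuous).isCompact).exists_isLeast hCne
        have hzm : z < m := by
          by_contra h
          push_neg at h
          have : f m ≤ g0 z := le_csSup (hub z) (mem_image_of_mem f h)
          exact absurd hb (not_lt.2 (le_trans hmC this))
        filter_upwards [isOpen_Iio.mem_nhds hzm] with w hw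
        obtain ⟨p, hpw, hfp, -⟩ := hgr w
        have hpC : p ∉ {w : K | b ≤ f w} := fun hpC =>
          absurd (hmlb hpC) (not_le.2 (lt_of_le_of_lt hpw hw))
        rw [← hfp]
        exact not_le.1 hpC
  refine ⟨⟨g0, hcont⟩, hmono, ?_⟩
  have hx : g0 x = 0 := by
    apply IsGreatest.csSup_eq
    constructor
    · exact ⟨x, self_mem_Iic, hf0 self_mem_Iic⟩
    · rintro v ⟨q, hq, rfl⟩
      exact le_of_eq (hf0 hq)
  have hy : (1 : ℝ) ≤ g0 y := by
    have : f y = 1 := hf1 (mem_Ici.2 (le_refl y))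
    rw [← this]
    exact hfle y
  simp only [ContinuousMap.coe_mk]
  rw [hx]
  exact lt_of_lt_of_le one_pos hy

end Aux

/-- In C(K) for a compact linearly ordered space K, the continuous increasing functions
are linearly dense. -/
theorem increasing_functions_linearly_dense
    {K : Type*} [TopologicalSpace K] [LinearOrder K] [OrderTopology K] [CompactSpace K] :
    (Submodule.span ℝ {f : C(K, ℝ) | Monotone (f : K → ℝ)}).topologicalClosure = ⊤ := by
  set M : Set C(K, ℝ) := {f : C(K, ℝ) | Monotone (f : K → ℝ)} with hM
  have hone : (1 : C(K, ℝ)) ∈ M := fun a b _ => le_refl _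
  have hbase : ∀ f ∈ M, ∀ g ∈ M, f * g ∈ Submodule.span ℝ M := by
    intro f hf g hg
    have key : (f + ContinuousMap.const K ‖f‖) * (g + ContinuousMap.const K ‖g‖) ∈ M := by
      intro a b hab
      have hfa := (abs_le.1 (f.norm_coe_le_norm a)).1
      have hgb := (abs_le.1 (g.norm_coe_le_norm b)).1
      have h1 : f a + ‖f‖ ≤ f b + ‖f‖ := by linarith [hf hab]
      have h2 : g a + ‖g‖ ≤ g b + ‖g‖ := by linarith [hg hab]
      simp only [ContinuousMap.mul_apply, ContinuousMap.add_apply, ContinuousMap.const_apply]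
      exact mul_le_mul h1 h2 (by linarith [(abs_le.1 (g.norm_coe_le_norm a)).1])
        (by linarith [(abs_le.1 (f.norm_coe_le_norm b)).1])
    have heq : f * g = (f + ContinuousMap.const K ‖f‖) * (g + ContinuousMap.const K ‖g‖)
        - ‖g‖ • f - ‖f‖ • g - (‖f‖ * ‖g‖) • (1 : C(K, ℝ)) := by
      ext a
      simp only [ContinuousMap.sub_apply, ContinuousMap.mul_apply, ContinuousMap.add_apply,
        ContinuousMap.const_apply, ContinuousMap.smul_apply, ContinuousMap.one_apply,
        smul_eq_mul]
      ring
    rw [heq]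
    exact sub_mem (sub_mem (sub_mem (Submodule.subset_span key)
      (Submodule.smul_mem _ _ (Submodule.subset_span hf)))
      (Submodule.smul_mem _ _ (Submodule.subset_span hg)))
      (Submodule.smul_mem _ _ (Submodule.subset_span hone))
  have hmul : ∀ a b : C(K, ℝ), a ∈ Submodule.span ℝ M → b ∈ Submodule.span ℝ M →
      a * b ∈ Submodule.span ℝ M := by
    intro a b ha hb
    have hle : Submodule.span ℝ M * Submodule.span ℝ M ≤ Submodule.span ℝ M := by
      rw [Submodule.span_mul_span, Submodule.span_le]
      rintro v ⟨f, hf, g, hg, rfl⟩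
      exact hbase f hf g hg
    exact hle (Submodule.mul_mem_mul ha hb)
  set A : Subalgebra ℝ C(K, ℝ) :=
    (Submodule.span ℝ M).toSubalgebra (Submodule.subset_span hone) hmul with hA
  have hsep : A.SeparatesPoints := by
    intro u v huv
    rcases huv.lt_or_gt with h | h
    · obtain ⟨g, hgmono, hglt⟩ := exists_monotone_sep h
      exact ⟨g, ⟨g, Submodule.subset_span hgmono, rfl⟩, ne_of_lt hglt⟩
    · obtain ⟨g, hgmono, hglt⟩ := exists_monotone_sep h
      exact ⟨g, ⟨g, Submodule.subset_span hgmono, rfl⟩, (ne_of_lt hglt).symm⟩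
  have htop := ContinuousMap.subalgebra_topologicalClosure_eq_top_of_separatesPoints A hsep
  apply SetLike.ext'
  rw [Submodule.topologicalClosure_coe, Submodule.top_coe]
  have h2 := congrArg SetLike.coe htop
  rw [Subalgebra.topologicalClosure_coe] at h2
  simp at h2
  exact h2
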